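/- Let U = {U_n : n ∈ ℕ} be a γ_k-shrinkable cozero cover of a Tychonoff space X, witnessed by a γ_k-cover of zero sets {F(U_n)}. Then the set S = {f ∈ C(X) : f ≡ 1 on X∖U_n for some n} is sequentially dense in C_k(X). -/

import Mathlib

open Filter Topology ContinuousMap

def IsCozero {X : Type*} [TopologicalSpace X] (u : Set X) : Prop :=
  ∃ f : C(X, ℝ), u = {x | f x ≠ 0}

def IsZeroSet {X : Type*} [TopologicalSpace X] (s : Set X) : Prop :=
  ∃ f : C(X, ℝ), s = {x | f x = 0}

def SeqDense {Y : Type*} [TopologicalSpace Y] (A : Set Y) : Prop :=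
  ∀ y : Y, ∃ u : ℕ → Y, (∀ n, u n ∈ A) ∧ Tendsto u atTop (𝓝 y)

/-- Disjoint zero sets are completely separated. -/
lemma zero_sets_sep {X : Type*} [TopologicalSpace X] {Z W : Set X}
    (hZ : IsZeroSet Z) (hW : IsZeroSet W) (hd : Disjoint Z W) :
    ∃ φ : C(X, ℝ), (∀ x ∈ Z, φ x = 0) ∧ (∀ x ∈ W, φ x = 1) := by
  obtain ⟨g, hg⟩ := hZ
  obtain ⟨f, hf⟩ := hW
  have hden : ∀ x : X, f x ^ 2 + g x ^ 2 ≠ 0 := by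
    intro x hx
    have h1 : f x = 0 ∧ g x = 0 := by
      constructor <;> nlinarith [sq_nonneg (f x), sq_nonneg (g x)]
    have hxZ : x ∈ Z := by rw [hg]; exact h1.2
    have hxW : x ∈ W := by rw [hf]; exact h1.1
    exact Set.disjoint_left.mp hd hxZ hxW
  refine ⟨⟨fun x => g x ^ 2 / (f x ^ 2 + g x ^ 2), ?_⟩, ?_, ?_⟩
  · exact ((g.continuous.pow 2).div
      ((f.continuous.pow 2).add (g.continuous.pow 2)) hden)
  · intro x hx
    have : g x = 0 := by rw [hg] at hx; exact hx
    simp [this]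
  · intro x hx
    have hfx : f x = 0 := by rw [hf] at hx; exact hx
    have hgx : g x ≠ 0 := by
      intro h0
      exact (Set.disjoint_left.mp hd (by simp [hg, h0]) hx)
    have : g x ^ 2 ≠ 0 := pow_ne_zero 2 hgx
    simp only [ContinuousMap.coe_mk, hfx]
    field_simp
    ring

/-- If `{U_n}` is a γ_k-shrinkable cozero cover of a Tychonoff space `X`, witnessed
by a γ_k-cover of zero-sets `{F_n}` with `F_n ⊆ U_n`, then the set
`S = {f ∈ C(X) : f ≡ 1 on X∖U_n for some n}` is sequentially dense in `C_k(X)`. -/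
theorem stmt12 {X : Type*} [TopologicalSpace X] [T35Space X]
    (U F : ℕ → Set X)
    (hcoz : ∀ n, IsCozero (U n)) (hproper : ∀ n, U n ≠ Set.univ)
    (hzero : ∀ n, IsZeroSet (F n)) (hsub : ∀ n, F n ⊆ U n)
    (hγ : ∀ K : Set X, IsCompact K → {n : ℕ | ¬ K ⊆ F n}.Finite) :
    SeqDense {f : C(X, ℝ) | ∃ n, ∀ x ∉ U n, f x = 1} := by
  intro h
  -- build φ n : 0 on F n, 1 on X \ U n
  have key : ∀ n, ∃ φ : C(X, ℝ), (∀ x ∈ F n, φ x = 0) ∧ (∀ x ∉ U n, φ x = 1) := by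
    intro n
    have hWzero : IsZeroSet (U n)ᶜ := by
      obtain ⟨f, hf⟩ := hcoz n
      exact ⟨f, by ext x; simp [hf]⟩
    have hd : Disjoint (F n) (U n)ᶜ :=
      Set.disjoint_left.mpr fun x hx hxc => hxc (hsub n hx)
    obtain ⟨φ, h0, h1⟩ := zero_sets_sep (hzero n) hWzero hd
    exact ⟨φ, h0, fun x hx => h1 x hx⟩
  choose φ hφ0 hφ1 using key
  set u : ℕ → C(X, ℝ) := fun n => h * (1 - φ n) + φ n with hu
  refine ⟨u, fun n => ⟨n, fun x hx => ?_⟩, ?_⟩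
  · simp [hu, hφ1 n x hx]
  · rw [ContinuousMap.tendsto_iff_forall_isCompact_tendstoUniformlyOn]
    intro K hK
    have hev : ∀ᶠ n in atTop, K ⊆ F n := by
      rw [← Nat.cofinite_eq_atTop, eventually_cofinite]
      exact hγ K hK
    intro V hV
    filter_upwards [hev] with n hn x hx
    have : u n x = h x := by simp [hu, hφ0 n x (hn hx)]
    rw [this]
    exact refl_mem_uniformity hV
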